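/- arXiv:2412.04179 — 2 statements merged into one kernel-verified Lean document; each statement's English description precedes it below -/
import Mathlib

section
/- Let n, L ≥ 1, let A ∈ ℝ^{n×n×L×L} be a nonnegative tensor, let α, β > 1, and let x ∈ ℝ^n, c ∈ ℝ^L be entrywise positive. Then for every index m, |Σ_{p=1}^L (∂²f_{α,β}/∂c_p ∂x_m)(x,c) · c_p| ≤ 2 · (∂f_{α,β}/∂x_m)(x,c). -/
open Finset Function

/-- The multilayer core-periphery objective. -/
noncomputable def mlObjective {n L : ℕ} (A : Fin n → Fin n → Fin L → Fin L → ℝ)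
    (α β : ℝ) (x : Fin n → ℝ) (c : Fin L → ℝ) : ℝ :=
  ∑ i, ∑ j, ∑ k, ∑ l,
    A i j k l * (x i ^ α + x j ^ α) ^ (1 / α) * (c k ^ β + c l ^ β) ^ (1 / β)

/-- The partial derivative `∂f/∂x_m` of the objective with respect to node coreness. -/
noncomputable def partialX {n L : ℕ} (A : Fin n → Fin n → Fin L → Fin L → ℝ)
    (α β : ℝ) (m : Fin n) (x : Fin n → ℝ) (c : Fin L → ℝ) : ℝ :=
  deriv (fun t => mlObjective A α β (Function.update x m t) c) (x m)


/-- Derivative coefficient for a single pair term. -/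
noncomputable def mlGd {n : ℕ} (α : ℝ) (m : Fin n) (x : Fin n → ℝ) (i j : Fin n) : ℝ :=
  (x i ^ α + x j ^ α) ^ (1 / α - 1) *
    ((if i = m then x m ^ (α - 1) else 0) + (if j = m then x m ^ (α - 1) else 0))

lemma pair_hasDerivAt {ι : Type*} [DecidableEq ι] (y : ι → ℝ) (hy : ∀ i, 0 < y i)
    (p : ℝ) (hp : 1 < p) (m i j : ι) :
    HasDerivAt (fun t => (Function.update y m t i ^ p + Function.update y m t j ^ p) ^ (1 / p))
      ((y i ^ p + y j ^ p) ^ (1 / p - 1) *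
        ((if i = m then y m ^ (p - 1) else 0) + (if j = m then y m ^ (p - 1) else 0))) (y m) := by
  have hp0 : p ≠ 0 := by linarith
  have hone : ∀ i : ι, HasDerivAt (fun t => Function.update y m t i ^ p)
      (if i = m then p * y m ^ (p - 1) else 0) (y m) := by
    intro i
    rcases eq_or_ne i m with h | h
    · subst h
      have heq : (fun t => Function.update y i t i ^ p) = fun t => t ^ p := by
        funext t; rw [Function.update_self]
      rw [heq, if_pos rfl]
      exact Real.hasDerivAt_rpow_const (Or.inl (hy i).ne')
    · have heq : (fun t => Function.update y m t i ^ p) = fun _ => y i ^ p := by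
        funext t; rw [Function.update_of_ne h]
      rw [heq, if_neg h]
      exact hasDerivAt_const _ _
  have hS : (0 : ℝ) < y i ^ p + y j ^ p :=
    add_pos (Real.rpow_pos_of_pos (hy i) p) (Real.rpow_pos_of_pos (hy j) p)
  have hx0 : Function.update y m (y m) i ^ p + Function.update y m (y m) j ^ p ≠ 0 := by
    rw [Function.update_eq_self]; exact hS.ne'
  have h2 := ((hone i).add (hone j)).rpow_const (p := 1 / p) (Or.inl hx0)
  convert h2 using 1
  · rfl
  simp only [Pi.add_apply, Function.update_eq_self]
  split_ifs <;> field_simp <;> ring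

lemma partialX_eq {n L : ℕ} (A : Fin n → Fin n → Fin L → Fin L → ℝ)
    (α β : ℝ) (hα : 1 < α) (m : Fin n) (x : Fin n → ℝ) (hx : ∀ i, 0 < x i) (c : Fin L → ℝ) :
    partialX A α β m x c =
      ∑ i, ∑ j, ∑ k, ∑ l, A i j k l * mlGd α m x i j * (c k ^ β + c l ^ β) ^ (1 / β) := by
  have h : HasDerivAt (fun t => mlObjective A α β (Function.update x m t) c)
      (∑ i, ∑ j, ∑ k, ∑ l, A i j k l * mlGd α m x i j * (c k ^ β + c l ^ β) ^ (1 / β)) (x m) := by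
    unfold mlObjective
    refine HasDerivAt.fun_sum fun i _ => HasDerivAt.fun_sum fun j _ => HasDerivAt.fun_sum fun k _ =>
      HasDerivAt.fun_sum fun l _ => ?_
    exact ((pair_hasDerivAt x hx α hα m i j).const_mul (A i j k l)).mul_const _
  exact h.deriv

lemma partialX_update_hasDerivAt {n L : ℕ} (A : Fin n → Fin n → Fin L → Fin L → ℝ)
    (α β : ℝ) (hα : 1 < α) (hβ : 1 < β) (m : Fin n) (x : Fin n → ℝ) (hx : ∀ i, 0 < x i)
    (c : Fin L → ℝ) (hc : ∀ k, 0 < c k) (p : Fin L) :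
    HasDerivAt (fun t => partialX A α β m x (Function.update c p t))
      (∑ i, ∑ j, ∑ k, ∑ l, A i j k l * mlGd α m x i j *
        ((c k ^ β + c l ^ β) ^ (1 / β - 1) *
          ((if k = p then c p ^ (β - 1) else 0) + (if l = p then c p ^ (β - 1) else 0)))) (c p) := by
  have heq : (fun t => partialX A α β m x (Function.update c p t)) =
      fun t => ∑ i, ∑ j, ∑ k, ∑ l, A i j k l * mlGd α m x i j *
        (Function.update c p t k ^ β + Function.update c p t l ^ β) ^ (1 / β) :=
    funext fun t => partialX_eq A α β hα m x hx _
  rw [heq]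
  refine HasDerivAt.fun_sum fun i _ => HasDerivAt.fun_sum fun j _ => HasDerivAt.fun_sum fun k _ =>
    HasDerivAt.fun_sum fun l _ => ?_
  exact (pair_hasDerivAt c hc β hβ p k l).const_mul (A i j k l * mlGd α m x i j)

lemma mlGd_nonneg {n : ℕ} (α : ℝ) (m : Fin n) (x : Fin n → ℝ) (hx : ∀ i, 0 < x i) (i j : Fin n) :
    0 ≤ mlGd α m x i j := by
  unfold mlGd
  refine mul_nonneg (Real.rpow_nonneg ?_ _) (add_nonneg ?_ ?_)
  · exact (add_pos (Real.rpow_pos_of_pos (hx i) α) (Real.rpow_pos_of_pos (hx j) α)).le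
  · split_ifs
    · exact (Real.rpow_pos_of_pos (hx m) _).le
    · exact le_refl _
  · split_ifs
    · exact (Real.rpow_pos_of_pos (hx m) _).le
    · exact le_refl _

theorem second_partial_cx_bound {n L : ℕ} (hn : 1 ≤ n) (hL : 1 ≤ L)
    (A : Fin n → Fin n → Fin L → Fin L → ℝ) (hA : ∀ i j k l, 0 ≤ A i j k l)
    (α β : ℝ) (hα : 1 < α) (hβ : 1 < β)
    (x : Fin n → ℝ) (c : Fin L → ℝ) (hx : ∀ i, 0 < x i) (hc : ∀ k, 0 < c k) :
    ∀ m : Fin n,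
      |∑ p, deriv (fun t => partialX A α β m x (Function.update c p t)) (c p) * c p| ≤
        2 * partialX A α β m x c := by
  intro m
  have hPX : partialX A α β m x c =
      ∑ i, ∑ j, ∑ k, ∑ l, A i j k l * mlGd α m x i j * (c k ^ β + c l ^ β) ^ (1 / β) :=
    partialX_eq A α β hα m x hx c
  have hder : ∀ p : Fin L, deriv (fun t => partialX A α β m x (Function.update c p t)) (c p) =
      ∑ i, ∑ j, ∑ k, ∑ l, A i j k l * mlGd α m x i j *
        ((c k ^ β + c l ^ β) ^ (1 / β - 1) *
          ((if k = p then c p ^ (β - 1) else 0) + (if l = p then c p ^ (β - 1) else 0))) :=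
    fun p => (partialX_update_hasDerivAt A α β hα hβ m x hx c hc p).deriv
  have key : ∀ k : Fin L, ∑ p, (if k = p then c p ^ (β - 1) else 0) * c p = c k ^ β := by
    intro k
    have h1 : ∀ p : Fin L, (if k = p then c p ^ (β - 1) else 0) * c p =
        if k = p then c p ^ (β - 1) * c p else 0 := by
      intro p; split_ifs <;> simp
    simp only [h1]
    rw [Finset.sum_ite_eq]
    simp only [Finset.mem_univ, if_true]
    rw [← Real.rpow_add_one (hc k).ne', show β - 1 + 1 = β by ring]
  have hsum : (∑ p, deriv (fun t => partialX A α β m x (Function.update c p t)) (c p) * c p) =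
      partialX A α β m x c := by
    rw [hPX]
    simp only [hder, Finset.sum_mul]
    rw [Finset.sum_comm]
    refine Finset.sum_congr rfl fun i _ => ?_
    rw [Finset.sum_comm]
    refine Finset.sum_congr rfl fun j _ => ?_
    rw [Finset.sum_comm]
    refine Finset.sum_congr rfl fun k _ => ?_
    rw [Finset.sum_comm]
    refine Finset.sum_congr rfl fun l _ => ?_
    have hS : (0 : ℝ) < c k ^ β + c l ^ β :=
      add_pos (Real.rpow_pos_of_pos (hc k) β) (Real.rpow_pos_of_pos (hc l) β)
    have step1 : (∑ p, A i j k l * mlGd α m x i j *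
        ((c k ^ β + c l ^ β) ^ (1 / β - 1) *
          ((if k = p then c p ^ (β - 1) else 0) + (if l = p then c p ^ (β - 1) else 0))) * c p) =
        (A i j k l * mlGd α m x i j * (c k ^ β + c l ^ β) ^ (1 / β - 1)) *
          (∑ p, (if k = p then c p ^ (β - 1) else 0) * c p) +
        (A i j k l * mlGd α m x i j * (c k ^ β + c l ^ β) ^ (1 / β - 1)) *
          (∑ p, (if l = p then c p ^ (β - 1) else 0) * c p) := by
      rw [Finset.mul_sum, Finset.mul_sum, ← Finset.sum_add_distrib]
      exact Finset.sum_congr rfl fun p _ => by ring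
    rw [step1, key k, key l]
    have hmul : (c k ^ β + c l ^ β) ^ (1 / β - 1) * (c k ^ β + c l ^ β) =
        (c k ^ β + c l ^ β) ^ (1 / β) := by
      rw [← Real.rpow_add_one hS.ne', show 1 / β - 1 + 1 = 1 / β by ring]
    linear_combination (A i j k l * mlGd α m x i j) * hmul
  have hD0 : 0 ≤ partialX A α β m x c := by
    rw [hPX]
    refine Finset.sum_nonneg fun i _ => Finset.sum_nonneg fun j _ => Finset.sum_nonneg fun k _ =>
      Finset.sum_nonneg fun l _ => ?_
    exact mul_nonneg (mul_nonneg (hA i j k l) (mlGd_nonneg α m x hx i j))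
      (Real.rpow_nonneg (add_pos (Real.rpow_pos_of_pos (hc k) β)
        (Real.rpow_pos_of_pos (hc l) β)).le _)
  rw [hsum, abs_of_nonneg hD0]
  linarith
end

section
/- Let n, L ≥ 1, let A ∈ ℝ^{n×n×L×L} be a nonnegative tensor, let α, β > 1, and let x ∈ ℝ^n, c ∈ ℝ^L be entrywise positive. Then for every index p, |Σ_{l=1}^L (∂²f_{α,β}/∂c_l ∂c_p)(x,c) · c_l| ≤ |β − 1| · (∂f_{α,β}/∂c_p)(x,c). -/
open Finset Function

/-- The partial derivative `∂f/∂c_p` of the objective with respect to layer coreness. -/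
noncomputable def partialC {n L : ℕ} (A : Fin n → Fin n → Fin L → Fin L → ℝ)
    (α β : ℝ) (p : Fin L) (x : Fin n → ℝ) (c : Fin L → ℝ) : ℝ :=
  deriv (fun t => mlObjective A α β x (Function.update c p t)) (c p)

/-- derivative of one term of the objective w.r.t. `c p`. -/
noncomputable def Dterm {L : ℕ} (β : ℝ) (p : Fin L) (c : Fin L → ℝ) (k l : Fin L) : ℝ :=
  (c k ^ β + c l ^ β) ^ (1 / β - 1) * c p ^ (β - 1) *
    ((if k = p then (1 : ℝ) else 0) + (if l = p then (1 : ℝ) else 0))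

/-- derivative of `Dterm` w.r.t. `c q`. -/
noncomputable def Eterm {L : ℕ} (β : ℝ) (p q : Fin L) (c : Fin L → ℝ) (k l : Fin L) : ℝ :=
  (β * c q ^ (β - 1) * ((if k = q then (1 : ℝ) else 0) + (if l = q then (1 : ℝ) else 0)) *
        (1 / β - 1) * (c k ^ β + c l ^ β) ^ (1 / β - 1 - 1) * c p ^ (β - 1) +
      (c k ^ β + c l ^ β) ^ (1 / β - 1) *
        ((β - 1) * c p ^ (β - 2) * (if p = q then (1 : ℝ) else 0))) *
    ((if k = p then (1 : ℝ) else 0) + (if l = p then (1 : ℝ) else 0))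

lemma hasDerivAt_S {L : ℕ} {β : ℝ} (γ : ℝ) (hβ : 1 < β) (k l q : Fin L)
    (c : Fin L → ℝ) (hc : ∀ m, 0 < c m) :
    HasDerivAt (fun t => (Function.update c q t k ^ β + Function.update c q t l ^ β) ^ γ)
      (β * c q ^ (β - 1) * ((if k = q then (1 : ℝ) else 0) + (if l = q then (1 : ℝ) else 0)) * γ *
        (c k ^ β + c l ^ β) ^ (γ - 1)) (c q) := by
  have hck := hc k
  have hcl := hc l
  have hS : c k ^ β + c l ^ β ≠ 0 := by positivity
  have hk : HasDerivAt (fun t : ℝ => Function.update c q t k ^ β)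
      (if k = q then β * c q ^ (β - 1) else 0) (c q) := by
    simp only [Function.update_apply]
    by_cases h : k = q
    · simpa [h] using Real.hasDerivAt_rpow_const (p := β) (x := c q) (Or.inr hβ.le)
    · simpa [h] using hasDerivAt_const (c q) (c k ^ β)
  have hl : HasDerivAt (fun t : ℝ => Function.update c q t l ^ β)
      (if l = q then β * c q ^ (β - 1) else 0) (c q) := by
    simp only [Function.update_apply]
    by_cases h : l = q
    · simpa [h] using Real.hasDerivAt_rpow_const (p := β) (x := c q) (Or.inr hβ.le)
    · simpa [h] using hasDerivAt_const (c q) (c l ^ β)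
  have h2 := (hk.fun_add hl).rpow_const (p := γ)
    (by left; simpa [Function.update_eq_self] using hS)
  simp only [Function.update_eq_self] at h2
  convert h2 using 1
  split_ifs <;> ring

lemma hasDerivAt_obj {n L : ℕ} (A : Fin n → Fin n → Fin L → Fin L → ℝ)
    (α β : ℝ) (hβ : 1 < β) (p : Fin L) (x : Fin n → ℝ) (c : Fin L → ℝ)
    (hc : ∀ m, 0 < c m) :
    HasDerivAt (fun t => mlObjective A α β x (Function.update c p t))
      (∑ i, ∑ j, ∑ k, ∑ l,
        A i j k l * (x i ^ α + x j ^ α) ^ (1 / α) * Dterm β p c k l) (c p) := by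
  unfold mlObjective
  refine HasDerivAt.fun_sum fun i _ => HasDerivAt.fun_sum fun j _ => HasDerivAt.fun_sum fun k _ =>
    HasDerivAt.fun_sum fun l _ => ?_
  have h := (hasDerivAt_S (1 / β) hβ k l p c hc).const_mul
    (A i j k l * (x i ^ α + x j ^ α) ^ (1 / α))
  refine h.congr_deriv ?_
  unfold Dterm
  have hβ0 : β ≠ 0 := by positivity
  field_simp

lemma partialC_eq {n L : ℕ} (A : Fin n → Fin n → Fin L → Fin L → ℝ)
    (α β : ℝ) (hβ : 1 < β) (p : Fin L) (x : Fin n → ℝ) (c : Fin L → ℝ)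
    (hc : ∀ m, 0 < c m) :
    partialC A α β p x c =
      ∑ i, ∑ j, ∑ k, ∑ l,
        A i j k l * (x i ^ α + x j ^ α) ^ (1 / α) * Dterm β p c k l :=
  (hasDerivAt_obj A α β hβ p x c hc).deriv

lemma hasDerivAt_D {L : ℕ} {β : ℝ} (hβ : 1 < β) (p q k l : Fin L)
    (c : Fin L → ℝ) (hc : ∀ m, 0 < c m) :
    HasDerivAt (fun t => Dterm β p (Function.update c q t) k l)
      (Eterm β p q c k l) (c q) := by
  have h1 := hasDerivAt_S (1 / β - 1) hβ k l q c hc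
  have h2 : HasDerivAt (fun t : ℝ => Function.update c q t p ^ (β - 1))
      ((β - 1) * c p ^ (β - 2) * (if p = q then (1 : ℝ) else 0)) (c q) := by
    simp only [Function.update_apply]
    by_cases h : p = q
    · have h3 := Real.hasDerivAt_rpow_const (p := β - 1) (x := c q) (Or.inl (hc q).ne')
      have h4 : β - 1 - 1 = β - 2 := by ring
      rw [h4] at h3
      simpa [h] using h3
    · simpa [h] using hasDerivAt_const (c q) (c p ^ (β - 1))
  have h3 := (h1.mul h2).mul_const
    ((if k = p then (1 : ℝ) else 0) + (if l = p then (1 : ℝ) else 0))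
  simp only [Function.update_eq_self] at h3
  exact h3

lemma sum_Eterm {L : ℕ} {β : ℝ} (hβ : 1 < β) (p k l : Fin L)
    (c : Fin L → ℝ) (hc : ∀ m, 0 < c m) :
    ∑ q, Eterm β p q c k l * c q = 0 := by
  have hβ0 : β ≠ 0 := by positivity
  have hck := hc k
  have hcl := hc l
  have hS : (0 : ℝ) < c k ^ β + c l ^ β := by positivity
  have hb : β * (1 / β - 1) = 1 - β := by field_simp
  have key : ∀ q, Eterm β p q c k l * c q =
      (1 - β) * (c k ^ β + c l ^ β) ^ (1 / β - 1 - 1) * c q ^ β * c p ^ (β - 1) *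
        ((if k = p then (1 : ℝ) else 0) + (if l = p then (1 : ℝ) else 0)) *
        (if k = q then (1 : ℝ) else 0) +
      (1 - β) * (c k ^ β + c l ^ β) ^ (1 / β - 1 - 1) * c q ^ β * c p ^ (β - 1) *
        ((if k = p then (1 : ℝ) else 0) + (if l = p then (1 : ℝ) else 0)) *
        (if l = q then (1 : ℝ) else 0) +
      (β - 1) * (c k ^ β + c l ^ β) ^ (1 / β - 1) * c p ^ (β - 1) *
        ((if k = p then (1 : ℝ) else 0) + (if l = p then (1 : ℝ) else 0)) *
        (if p = q then (1 : ℝ) else 0) := by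
    intro q
    have hcq : c q ^ (β - 1) * c q = c q ^ β := by
      rw [← Real.rpow_add_one (hc q).ne' (β - 1)]
      congr 1; ring
    have hcp : c p ^ (β - 2) * c p = c p ^ (β - 1) := by
      rw [← Real.rpow_add_one (hc p).ne' (β - 2)]
      congr 1; ring
    unfold Eterm
    by_cases hp : p = q
    · subst hp
      simp only [eq_self_iff_true, if_true]
      linear_combination
        (((if k = p then (1 : ℝ) else 0) + (if l = p then (1 : ℝ) else 0)) *
            c p ^ (β - 1) * c p * (c k ^ β + c l ^ β) ^ (1 / β - 1 - 1) * c p ^ (β - 1) *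
            ((if k = p then (1 : ℝ) else 0) + (if l = p then (1 : ℝ) else 0))) * hb +
        (((if k = p then (1 : ℝ) else 0) + (if l = p then (1 : ℝ) else 0)) * (1 - β) *
            (c k ^ β + c l ^ β) ^ (1 / β - 1 - 1) * c p ^ (β - 1) *
            ((if k = p then (1 : ℝ) else 0) + (if l = p then (1 : ℝ) else 0))) * hcq +
        ((β - 1) * (c k ^ β + c l ^ β) ^ (1 / β - 1) *
            ((if k = p then (1 : ℝ) else 0) + (if l = p then (1 : ℝ) else 0))) * hcp
    · simp only [if_neg hp]
      linear_combination
        (((if k = q then (1 : ℝ) else 0) + (if l = q then (1 : ℝ) else 0)) *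
            c q ^ (β - 1) * c q * (c k ^ β + c l ^ β) ^ (1 / β - 1 - 1) * c p ^ (β - 1) *
            ((if k = p then (1 : ℝ) else 0) + (if l = p then (1 : ℝ) else 0))) * hb +
        (((if k = q then (1 : ℝ) else 0) + (if l = q then (1 : ℝ) else 0)) * (1 - β) *
            (c k ^ β + c l ^ β) ^ (1 / β - 1 - 1) * c p ^ (β - 1) *
            ((if k = p then (1 : ℝ) else 0) + (if l = p then (1 : ℝ) else 0))) * hcq
  rw [Finset.sum_congr rfl fun q _ => key q]
  simp only [Finset.sum_add_distrib, mul_ite, mul_one, mul_zero, Finset.sum_ite_eq,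
    Finset.mem_univ, if_true]
  have hmul : (c k ^ β + c l ^ β) ^ (1 / β - 1 - 1) * (c k ^ β + c l ^ β) =
      (c k ^ β + c l ^ β) ^ (1 / β - 1) := by
    rw [← Real.rpow_add_one hS.ne' (1 / β - 1 - 1)]
    congr 1; ring
  linear_combination ((1 - β) * c p ^ (β - 1) *
    ((if k = p then (1 : ℝ) else 0) + (if l = p then (1 : ℝ) else 0))) * hmul

theorem second_partial_cc_bound {n L : ℕ} (hn : 1 ≤ n) (hL : 1 ≤ L)
    (A : Fin n → Fin n → Fin L → Fin L → ℝ) (hA : ∀ i j k l, 0 ≤ A i j k l)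
    (α β : ℝ) (hα : 1 < α) (hβ : 1 < β)
    (x : Fin n → ℝ) (c : Fin L → ℝ) (hx : ∀ i, 0 < x i) (hc : ∀ k, 0 < c k) :
    ∀ p : Fin L,
      |∑ l, deriv (fun t => partialC A α β p x (Function.update c l t)) (c l) * c l| ≤
        |β - 1| * partialC A α β p x c := by
  intro p
  -- step 1: each second derivative has an explicit value
  have key : ∀ q : Fin L, deriv (fun t => partialC A α β p x (Function.update c q t)) (c q) =
      ∑ i, ∑ j, ∑ k, ∑ l,
        A i j k l * (x i ^ α + x j ^ α) ^ (1 / α) * Eterm β p q c k l := by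
    intro q
    have hev : (fun t => partialC A α β p x (Function.update c q t)) =ᶠ[nhds (c q)]
        (fun t => ∑ i, ∑ j, ∑ k, ∑ l,
          A i j k l * (x i ^ α + x j ^ α) ^ (1 / α) * Dterm β p (Function.update c q t) k l) := by
      filter_upwards [eventually_gt_nhds (hc q)] with t ht
      have hc' : ∀ m, 0 < Function.update c q t m := by
        intro m
        rw [Function.update_apply]
        split <;> [exact ht; exact hc m]
      exact partialC_eq A α β hβ p x _ hc'
    rw [hev.deriv_eq]
    have hD : HasDerivAt (fun t => ∑ i, ∑ j, ∑ k, ∑ l,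
        A i j k l * (x i ^ α + x j ^ α) ^ (1 / α) * Dterm β p (Function.update c q t) k l)
        (∑ i, ∑ j, ∑ k, ∑ l,
          A i j k l * (x i ^ α + x j ^ α) ^ (1 / α) * Eterm β p q c k l) (c q) := by
      refine HasDerivAt.fun_sum fun i _ => HasDerivAt.fun_sum fun j _ => HasDerivAt.fun_sum fun k _ =>
        HasDerivAt.fun_sum fun l _ => ?_
      exact (hasDerivAt_D hβ p q k l c hc).const_mul _
    exact hD.deriv
  -- step 2: the whole sum is zero
  have hzero : ∑ q, deriv (fun t => partialC A α β p x (Function.update c q t)) (c q) * c q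
      = 0 := by
    have : ∑ q, deriv (fun t => partialC A α β p x (Function.update c q t)) (c q) * c q
        = ∑ i, ∑ j, ∑ k, ∑ l, A i j k l * (x i ^ α + x j ^ α) ^ (1 / α) *
            (∑ q, Eterm β p q c k l * c q) := by
      simp only [key, Finset.sum_mul, Finset.mul_sum]
      rw [Finset.sum_comm]
      refine Finset.sum_congr rfl fun i _ => ?_
      rw [Finset.sum_comm]
      refine Finset.sum_congr rfl fun j _ => ?_
      rw [Finset.sum_comm]
      refine Finset.sum_congr rfl fun k _ => ?_
      rw [Finset.sum_comm]
      refine Finset.sum_congr rfl fun l _ => ?_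
      refine Finset.sum_congr rfl fun q _ => ?_
      ring
    rw [this]
    simp [sum_Eterm hβ p _ _ c hc]
  rw [hzero, abs_zero]
  -- step 3: partialC is nonnegative
  have hpos : 0 ≤ partialC A α β p x c := by
    rw [partialC_eq A α β hβ p x c hc]
    refine Finset.sum_nonneg fun i _ => Finset.sum_nonneg fun j _ =>
      Finset.sum_nonneg fun k _ => Finset.sum_nonneg fun l _ => ?_
    have hD : 0 ≤ Dterm β p c k l := by
      unfold Dterm
      have hck := hc k
      have hcl := hc l
      have hcp := hc p
      have h1 : (0:ℝ) ≤ (c k ^ β + c l ^ β) ^ (1 / β - 1) := by positivity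
      have h2 : (0:ℝ) ≤ c p ^ (β - 1) := by positivity
      have h3 : (0:ℝ) ≤ (if k = p then (1:ℝ) else 0) + (if l = p then (1:ℝ) else 0) := by
        split_ifs <;> norm_num
      exact mul_nonneg (mul_nonneg h1 h2) h3
    have hxi := hx i
    have hxj := hx j
    have hX : (0:ℝ) ≤ (x i ^ α + x j ^ α) ^ (1 / α) := by positivity
    exact mul_nonneg (mul_nonneg (hA i j k l) hX) hD
  exact mul_nonneg (abs_nonneg _) hpos
end
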